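/- Let K be a metrizable compactum with dim K ≤ n, let 0 ≤ k ≤ n and m ≥ 1, and let π : 𝕀^m × K → 𝕀^m be the projection. If every map in C(𝕀^m × K, ℝ^n) can be approximated, uniformly to any prescribed accuracy, by maps g₁ with π×g₁ 0-dimensional, then every map in C(𝕀^m × K, ℝ^k) can be approximated, uniformly to any prescribed accuracy, by maps g with π×g (n − k)-dimensional. (Namely, lift h ∈ C(𝕀^m × K, ℝ^k) to h₁ with h = p∘h₁, where p : ℝ^n → ℝ^k is the canonical projection, approximate h₁ by g₁ with π×g₁ 0-dimensional, and take g = p∘g₁.) -/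

import Mathlib

open Set Topology Metric BoundedContinuousFunction

noncomputable section

/-- Covering dimension at most `n` (for a natural number `n`): every finite open cover
has an open refinement covering the space such that every point belongs to at most
`n + 1` members of the refinement. -/
def CovDimLENat (X : Type*) [TopologicalSpace X] (n : ℕ) : Prop :=
  ∀ 𝒰 : Set (Set X), 𝒰.Finite → (∀ U ∈ 𝒰, IsOpen U) → ⋃₀ 𝒰 = Set.univ →
    ∃ 𝒱 : Set (Set X), (∀ V ∈ 𝒱, IsOpen V) ∧ ⋃₀ 𝒱 = Set.univ ∧
      (∀ V ∈ 𝒱, ∃ U ∈ 𝒰, V ⊆ U) ∧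
      ∀ x : X, {V ∈ 𝒱 | x ∈ V}.Finite ∧ {V ∈ 𝒱 | x ∈ V}.ncard ≤ n + 1

/-- Covering dimension at most `n` for an integer `n`; negative bounds mean the space
is empty (`dim ∅ = -1`). -/
def CovDimLE (X : Type*) [TopologicalSpace X] (n : ℤ) : Prop :=
  IsEmpty X ∨ ∃ k : ℕ, (k : ℤ) ≤ n ∧ CovDimLENat X k

/-- A space is finite-dimensional if its covering dimension is at most `n` for some `n`. -/
def FiniteDimSpace (X : Type*) [TopologicalSpace X] : Prop :=
  ∃ n : ℕ, CovDimLENat X n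

/-- A perfect map: continuous, closed, with compact fibers. -/
def IsPerfectMap {X Y : Type*} [TopologicalSpace X] [TopologicalSpace Y] (f : X → Y) : Prop :=
  Continuous f ∧ IsClosedMap f ∧ ∀ y : Y, IsCompact (f ⁻¹' {y})

/-- A σ-perfect map: `X` is a countable union of closed sets `A i` whose images are
closed and on which `f` restricts to a perfect map onto its image. -/
def IsSigmaPerfectMap {X Y : Type*} [TopologicalSpace X] [TopologicalSpace Y] (f : X → Y) :
    Prop :=
  Continuous f ∧ ∃ A : ℕ → Set X, (⋃ i, A i) = Set.univ ∧
    ∀ i, IsClosed (A i) ∧ IsClosed (f '' A i) ∧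
      IsPerfectMap (Set.MapsTo.restrict f (A i) (f '' A i) (Set.mapsTo_image f (A i)))

/-- `dim f ≤ k`: every fiber of `f` has covering dimension at most `k`. -/
def DimMapLE {X Y : Type*} [TopologicalSpace X] [TopologicalSpace Y] (f : X → Y) (k : ℤ) :
    Prop :=
  ∀ y : Y, CovDimLE (f ⁻¹' {y}) k

/-- `B_n(h)`: the set of points of the codomain having at least `n` preimages. -/
def BranchSet {X Z : Type*} (h : X → Z) (n : ℕ) : Set Z :=
  {z | ∃ S : Finset X, n ≤ S.card ∧ ∀ x ∈ S, h x = z}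

/-- The source limitation topology on the space of bounded continuous maps. -/
def sourceLimitation (X E : Type*) [TopologicalSpace X] [PseudoMetricSpace E] :
    TopologicalSpace (X →ᵇ E) where
  IsOpen U := ∀ g ∈ U, ∃ α : X → ℝ, Continuous α ∧ (∀ x, 0 < α x) ∧
    ∀ h : X →ᵇ E, (∀ x, dist (h x) (g x) ≤ α x) → h ∈ U
  isOpen_univ := fun g _ =>
    ⟨fun _ => 1, continuous_const, fun _ => one_pos, fun _ _ => trivial⟩
  isOpen_inter := by
    rintro U V hU hV g ⟨hgU, hgV⟩
    obtain ⟨α, hαc, hαp, hα⟩ := hU g hgU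
    obtain ⟨β, hβc, hβp, hβ⟩ := hV g hgV
    exact ⟨fun x => min (α x) (β x), hαc.min hβc, fun x => lt_min (hαp x) (hβp x),
      fun h hh => ⟨hα h fun x => (hh x).trans (min_le_left _ _),
        hβ h fun x => (hh x).trans (min_le_right _ _)⟩⟩
  isOpen_sUnion := by
    rintro S hS g ⟨U, hU, hgU⟩
    obtain ⟨α, hc, hp, h⟩ := hS U hU g hgU
    exact ⟨α, hc, hp, fun h' hh' => ⟨U, hU, h h' hh'⟩⟩

/-- A C-space. -/
def IsCSpace (Y : Type*) [TopologicalSpace Y] : Prop :=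
  ∀ 𝒰 : ℕ → Set (Set Y), (∀ n, (∀ U ∈ 𝒰 n, IsOpen U) ∧ ⋃₀ 𝒰 n = Set.univ) →
    ∃ 𝒱 : ℕ → Set (Set Y),
      (∀ n, (∀ V ∈ 𝒱 n, IsOpen V) ∧ (∀ V ∈ 𝒱 n, ∃ U ∈ 𝒰 n, V ⊆ U) ∧
        (𝒱 n).Pairwise (Disjoint · ·)) ∧
      ⋃₀ (⋃ n, 𝒱 n) = Set.univ

/-- `F` is a `Z_m`-set in `M`: `F` is closed and the maps from the `m`-cube avoiding `F`
are dense in `C(𝕀^m, M)` (uniform convergence topology). -/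
def IsZmSet (m : ℕ) {M : Type*} [TopologicalSpace M] (F : Set M) : Prop :=
  IsClosed F ∧ Dense {u : C((Fin m → unitInterval), M) | ∀ z, u z ∉ F}

/-- `F` is a `Z`-set in `M` if it is a `Z_m`-set for all `m`. -/
def IsZSet {M : Type*} [TopologicalSpace M] (F : Set M) : Prop :=
  ∀ m : ℕ, IsZmSet m F

end

section Transport

theorem covDimLENat_congr {A B : Type*} [TopologicalSpace A] [TopologicalSpace B]
    (e : A ≃ₜ B) {i : ℕ} (h : CovDimLENat B i) : CovDimLENat A i := by
  intro 𝒰 hfin hopen hcov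
  obtain ⟨𝒱', h1, h2, h3, h4⟩ := h ((fun U => e.symm ⁻¹' U) '' 𝒰) (hfin.image _)
    (by rintro V ⟨U, hU, rfl⟩; exact (hopen U hU).preimage e.symm.continuous)
    (by
      ext b
      simp only [mem_sUnion, mem_image, mem_univ, iff_true]
      have : e.symm b ∈ ⋃₀ 𝒰 := hcov ▸ mem_univ _
      obtain ⟨U, hU, hb⟩ := this
      exact ⟨_, ⟨U, hU, rfl⟩, hb⟩)
  refine ⟨(fun V => e ⁻¹' V) '' 𝒱', ?_, ?_, ?_, ?_⟩
  · rintro V ⟨V', hV', rfl⟩; exact (h1 V' hV').preimage e.continuous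
  · ext a
    simp only [mem_sUnion, mem_image, mem_univ, iff_true]
    have : e a ∈ ⋃₀ 𝒱' := h2 ▸ mem_univ _
    obtain ⟨V', hV', hb⟩ := this
    exact ⟨_, ⟨V', hV', rfl⟩, hb⟩
  · rintro V ⟨V', hV', rfl⟩
    obtain ⟨U', ⟨U, hU, rfl⟩, hsub⟩ := h3 V' hV'
    exact ⟨U, hU, fun a ha => by simpa using hsub ha⟩
  · intro x
    have hinj : Function.Injective (fun V : Set B => e ⁻¹' V) :=
      Set.preimage_injective.mpr e.surjective
    have hset : {V ∈ (fun V => e ⁻¹' V) '' 𝒱' | x ∈ V}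
        = (fun V => e ⁻¹' V) '' {V' ∈ 𝒱' | e x ∈ V'} := by
      ext V
      constructor
      · rintro ⟨⟨V', hV', rfl⟩, hx⟩; exact ⟨V', ⟨hV', hx⟩, rfl⟩
      · rintro ⟨V', ⟨hV', hx⟩, rfl⟩; exact ⟨⟨V', hV', rfl⟩, hx⟩
    rw [hset]
    obtain ⟨hf, hc⟩ := h4 (e x)
    exact ⟨hf.image _, by rw [Set.ncard_image_of_injective _ hinj]; exact hc⟩

theorem covDimLE_congr {A B : Type*} [TopologicalSpace A] [TopologicalSpace B]
    (e : A ≃ₜ B) {i : ℤ} (h : CovDimLE B i) : CovDimLE A i := by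
  rcases h with h | ⟨k, hk, hdim⟩
  · exact Or.inl ⟨fun a => h.elim (e a)⟩
  · exact Or.inr ⟨k, hk, covDimLENat_congr e hdim⟩

end Transport

section Chain

theorem chain_finsets_ncard {d : ℕ} {𝒮 : Set (Finset (Fin d))}
    (hchain : ∀ S ∈ 𝒮, ∀ T ∈ 𝒮, S ⊆ T ∨ T ⊆ S) : 𝒮.Finite ∧ 𝒮.ncard ≤ d + 1 := by
  have hfin : 𝒮.Finite := Set.toFinite _
  refine ⟨hfin, ?_⟩
  have hinj : Set.InjOn Finset.card 𝒮 := by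
    intro S hS T hT hST
    rcases hchain S hS T hT with h | h
    · exact Finset.eq_of_subset_of_card_le h (le_of_eq hST.symm)
    · exact (Finset.eq_of_subset_of_card_le h (le_of_eq hST)).symm
  calc 𝒮.ncard = (Finset.card '' 𝒮).ncard := (Set.ncard_image_of_injOn hinj).symm
    _ ≤ (Set.Iio (d + 1)).ncard := by
        apply Set.ncard_le_ncard ?_ (Set.finite_Iio _)
        rintro c ⟨S, hS, rfl⟩
        exact Nat.lt_succ_of_le (le_trans (Finset.card_le_univ S) (by simp))
    _ = d + 1 := by rw [← Finset.coe_range, Set.ncard_coe_finset, Finset.card_range]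

end Chain

section Grid

def gridW (d : ℕ) (ε : ℝ) (v : Fin d → ℤ) : Set (Fin d → ℝ) :=
  {x | (∀ i, |x i - ε * v i| < ε) ∧ ∀ i j, (ε * v i - x i) + (x j - ε * v j) < ε}

theorem gridW_isOpen (d : ℕ) (ε : ℝ) (v : Fin d → ℤ) : IsOpen (gridW d ε v) := by
  have h1 : IsOpen {x : Fin d → ℝ | ∀ i, |x i - ε * v i| < ε} := by
    rw [Set.setOf_forall]
    exact isOpen_iInter_of_finite fun i =>
      isOpen_lt ((continuous_apply i).sub continuous_const).abs continuous_const
  have h2 : IsOpen {x : Fin d → ℝ | ∀ i j, (ε * v i - x i) + (x j - ε * v j) < ε} := by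
    rw [Set.setOf_forall]
    refine isOpen_iInter_of_finite fun i => ?_
    rw [Set.setOf_forall]
    exact isOpen_iInter_of_finite fun j =>
      isOpen_lt ((continuous_const.sub (continuous_apply i)).add
        ((continuous_apply j).sub continuous_const)) continuous_const
  exact h1.inter h2

theorem gridW_mem {d : ℕ} {ε : ℝ} (hε : 0 < ε) (x : Fin d → ℝ) :
    x ∈ gridW d ε fun i => ⌊x i / ε⌋ := by
  have key : ∀ i, ε * (⌊x i / ε⌋ : ℝ) ≤ x i ∧ x i < ε * (⌊x i / ε⌋ : ℝ) + ε := by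
    intro i
    have h1 : (⌊x i / ε⌋ : ℝ) ≤ x i / ε := Int.floor_le _
    have h2 : x i / ε < (⌊x i / ε⌋ : ℝ) + 1 := Int.lt_floor_add_one _
    have hx : ε * (x i / ε) = x i := by field_simp
    constructor
    · nlinarith
    · nlinarith
  constructor
  · intro i
    obtain ⟨a, b⟩ := key i
    rw [abs_lt]
    constructor <;> linarith
  · intro i j
    obtain ⟨a, _⟩ := key i
    obtain ⟨_, b⟩ := key j
    linarith

theorem gridW_mult {d : ℕ} {ε : ℝ} (hε : 0 < ε) (x : Fin d → ℝ) :
    {v : Fin d → ℤ | x ∈ gridW d ε v}.Finite ∧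
      {v : Fin d → ℤ | x ∈ gridW d ε v}.ncard ≤ d + 1 := by
  classical
  set T := {v : Fin d → ℤ | x ∈ gridW d ε v} with hT
  set S : (Fin d → ℤ) → Finset (Fin d) :=
    (fun v => Finset.univ.filter fun i => x i < ε * v i) with hS
  -- basic coordinate bounds for members of T
  have bounds : ∀ v ∈ T, ∀ i, x i - ε < ε * (v i : ℝ) ∧ ε * (v i : ℝ) < x i + ε := by
    intro v hv i
    have := hv.1 i
    rw [abs_lt] at this
    constructor <;> linarith [this.1, this.2]
  have hinj : Set.InjOn S T := by
    intro v hv v' hv' hSS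
    funext i
    have hmem : (x i < ε * v i) ↔ (x i < ε * v' i) := by
      constructor <;> intro hc
      · have : i ∈ S v := by simp [hS, hc]
        rw [hSS] at this
        simpa [hS] using this
      · have : i ∈ S v' := by simp [hS, hc]
        rw [← hSS] at this
        simpa [hS] using this
    by_contra hne
    rcases lt_or_gt_of_ne hne with hlt | hlt
    all_goals {
      first
      | (have hcast : (v i : ℝ) + 1 ≤ (v' i : ℝ) := by exact_mod_cast Int.lt_iff_add_one_le.mp hlt)
      | (have hcast : (v' i : ℝ) + 1 ≤ (v i : ℝ) := by exact_mod_cast Int.lt_iff_add_one_le.mp hlt)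
      by_cases hc : x i < ε * v i
      · have hc' : x i < ε * v' i := hmem.mp hc
        have b1 := (bounds v hv i).2
        have b2 := (bounds v' hv' i).2
        nlinarith
      · have hc' : ¬ x i < ε * v' i := fun h => hc (hmem.mpr h)
        push_neg at hc hc'
        have b1 := (bounds v hv i).1
        have b2 := (bounds v' hv' i).1
        nlinarith
    }
  have hchain : ∀ a ∈ S '' T, ∀ b ∈ S '' T, a ⊆ b ∨ b ⊆ a := by
    rintro _ ⟨v, hv, rfl⟩ _ ⟨v', hv', rfl⟩
    by_contra hcon
    push_neg at hcon
    obtain ⟨h1, h2⟩ := hcon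
    obtain ⟨i, hiv, hiv'⟩ := Finset.not_subset.mp h1
    obtain ⟨j, hjv', hjv⟩ := Finset.not_subset.mp h2
    simp only [hS, Finset.mem_filter, Finset.mem_univ, true_and] at hiv hiv' hjv hjv'
    push_neg at hiv' hjv
    -- integer separation
    have gapi : (v' i : ℝ) + 1 ≤ (v i : ℝ) := by
      have hlt : v' i < v i := by
        by_contra hge
        push_neg at hge
        have : ε * (v i : ℝ) ≤ ε * (v' i : ℝ) :=
          mul_le_mul_of_nonneg_left (by exact_mod_cast hge) hε.le
        linarith
      exact_mod_cast Int.lt_iff_add_one_le.mp hlt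
    have gapj : (v j : ℝ) + 1 ≤ (v' j : ℝ) := by
      have hlt : v j < v' j := by
        by_contra hge
        push_neg at hge
        have : ε * (v' j : ℝ) ≤ ε * (v j : ℝ) :=
          mul_le_mul_of_nonneg_left (by exact_mod_cast hge) hε.le
        linarith
      exact_mod_cast Int.lt_iff_add_one_le.mp hlt
    have c1 := hv.2 i j
    have c2 := hv'.2 j i
    nlinarith
  obtain ⟨hSfin, hScard⟩ := chain_finsets_ncard hchain
  have hTfin : T.Finite := Set.Finite.of_finite_image hSfin hinj
  refine ⟨hTfin, ?_⟩
  rw [← Set.ncard_image_of_injOn hinj]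
  exact hScard

end Grid

section Step1

theorem step1 {X : Type*} [MetricSpace X] [CompactSpace X] {d : ℕ}
    {f : X → (Fin d → ℝ)} (hf : Continuous f)
    (hfib : ∀ w, CovDimLE (f ⁻¹' {w} : Set X) 0)
    (𝒰 : Set (Set X)) (h𝒰fin : 𝒰.Finite) (h𝒰open : ∀ U ∈ 𝒰, IsOpen U)
    (h𝒰cov : ⋃₀ 𝒰 = Set.univ) (w : Fin d → ℝ) :
    ∃ (O : Set (Fin d → ℝ)) (N : ℕ) (W : Fin N → Set X),
      IsOpen O ∧ w ∈ O ∧ (∀ i, IsOpen (W i)) ∧ (∀ i, ∃ U ∈ 𝒰, W i ⊆ U) ∧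
      Pairwise (Function.onFun Disjoint W) ∧ f ⁻¹' O ⊆ ⋃ i, W i := by
  classical
  have main : ∃ (N : ℕ) (W : Fin N → Set X), (∀ i, IsOpen (W i)) ∧
      (∀ i, ∃ U ∈ 𝒰, W i ⊆ U) ∧ Pairwise (Function.onFun Disjoint W) ∧
      f ⁻¹' {w} ⊆ ⋃ i, W i := by
    rcases (f ⁻¹' {w}).eq_empty_or_nonempty with hC | hC
    · refine ⟨0, fun i => i.elim0, fun i => i.elim0, fun i => i.elim0, ?_, by simp [hC]⟩
      intro i j _
      exact i.elim0
    · set C := (f ⁻¹' {w} : Set X) with hCdef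
      have hCclosed : IsClosed C := isClosed_singleton.preimage hf
      haveI hCcompact : CompactSpace C := isCompact_iff_compactSpace.mp hCclosed.isCompact
      have hdim0 : CovDimLENat C 0 := by
        rcases hfib w with he | ⟨k0, hk0, hd⟩
        · exact (he.false hC.to_subtype.some).elim
        · have hk00 : k0 = 0 := by omega
          rwa [hk00] at hd
      obtain ⟨𝒱, h𝒱open, h𝒱cov, h𝒱ref, h𝒱mult⟩ :=
        hdim0 ((fun U => (Subtype.val ⁻¹' U : Set C)) '' 𝒰) (h𝒰fin.image _)
          (by rintro V ⟨U, hU, rfl⟩; exact (h𝒰open U hU).preimage continuous_subtype_val)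
          (by
            ext c
            simp only [Set.mem_sUnion, Set.mem_image, Set.mem_univ, iff_true]
            have : (c : X) ∈ ⋃₀ 𝒰 := h𝒰cov ▸ Set.mem_univ _
            obtain ⟨U, hU, hc⟩ := this
            exact ⟨_, ⟨U, hU, rfl⟩, hc⟩)
      have hdisj : ∀ V ∈ 𝒱, ∀ V' ∈ 𝒱, V ≠ V' → Disjoint V V' := by
        intro V hV V' hV' hne
        rw [Set.disjoint_left]
        intro c hcV hcV'
        have hsub : ({V, V'} : Set (Set C)) ⊆ {A ∈ 𝒱 | c ∈ A} := by
          rintro A (rfl | rfl)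
          · exact ⟨hV, hcV⟩
          · exact ⟨hV', hcV'⟩
        have h2 : ({V, V'} : Set (Set C)).ncard = 2 := Set.ncard_pair hne
        have h3 := Set.ncard_le_ncard hsub (h𝒱mult c).1
        have h4 := (h𝒱mult c).2
        omega
      have hcov' : (Set.univ : Set C) ⊆ ⋃ V : 𝒱, (V : Set C) := by
        intro c _
        have : c ∈ ⋃₀ 𝒱 := h𝒱cov ▸ Set.mem_univ c
        obtain ⟨V, hV, hc⟩ := this
        exact Set.mem_iUnion.mpr ⟨⟨V, hV⟩, hc⟩
      obtain ⟨t, ht⟩ := isCompact_univ.elim_finite_subcover (fun V : 𝒱 => (V : Set C))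
        (fun V => h𝒱open V V.2) hcov'
      set N := t.card with hN
      set ev : Fin N → 𝒱 := fun i => (t.equivFin.symm i : t) with hev
      set Vfam : Fin N → Set C := fun i => ((ev i : 𝒱) : Set C) with hVfam
      have hVfammem : ∀ i, Vfam i ∈ 𝒱 := fun i => (ev i).2
      have hVfaminj : ∀ i j, i ≠ j → Vfam i ≠ Vfam j := by
        intro i j hij heq
        apply hij
        have : ev i = ev j := Subtype.ext heq
        have h2 : (t.equivFin.symm i : t) = (t.equivFin.symm j : t) := Subtype.ext this
        simpa using congrArg t.equivFin (h2)
      -- each member of the disjoint cover is closed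
      have hVclosed : ∀ V ∈ 𝒱, IsClosed V := by
        intro V hV
        have hcompl : Vᶜ = ⋃₀ (𝒱 \ {V}) := by
          ext c
          constructor
          · intro hc
            have : c ∈ ⋃₀ 𝒱 := h𝒱cov ▸ Set.mem_univ c
            obtain ⟨V', hV', hc'⟩ := this
            refine ⟨V', ⟨hV', ?_⟩, hc'⟩
            intro hEq
            rw [Set.mem_singleton_iff] at hEq
            exact hc (hEq ▸ hc')
          · rintro ⟨V', ⟨hV', hne⟩, hc'⟩ hcV
            rw [Set.mem_singleton_iff] at hne
            exact Set.disjoint_left.mp (hdisj V' hV' V hV hne) hc' hcV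
        have : IsOpen Vᶜ := by
          rw [hcompl]
          exact isOpen_sUnion fun V' hV' => h𝒱open V' hV'.1
        exact isOpen_compl_iff.mp this
      set Kc : Fin N → Set X := fun i => Subtype.val '' Vfam i with hKc
      have hKcomp : ∀ i, IsCompact (Kc i) :=
        fun i => ((hVclosed _ (hVfammem i)).isCompact).image continuous_subtype_val
      have hKdisj : ∀ i j, i ≠ j → Disjoint (Kc i) (Kc j) := by
        intro i j hij
        exact (Set.disjoint_image_iff Subtype.val_injective).mpr
          (hdisj _ (hVfammem i) _ (hVfammem j) (hVfaminj i j hij))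
      have hKsub : ∀ i, ∃ U ∈ 𝒰, Kc i ⊆ U := by
        intro i
        obtain ⟨U', ⟨U, hU, rfl⟩, hsub⟩ := h𝒱ref _ (hVfammem i)
        exact ⟨U, hU, Set.image_subset_iff.mpr hsub⟩
      have hKcov : C ⊆ ⋃ i, Kc i := by
        intro x hx
        have : (⟨x, hx⟩ : C) ∈ ⋃ V ∈ t, (V : Set C) := ht (Set.mem_univ _)
        rw [Set.mem_iUnion₂] at this
        obtain ⟨V, hVt, hcV⟩ := this
        refine Set.mem_iUnion.mpr ⟨t.equivFin ⟨V, hVt⟩, ⟨⟨x, hx⟩, ?_, rfl⟩⟩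
        show (⟨x, hx⟩ : C) ∈ Vfam (t.equivFin ⟨V, hVt⟩)
        simp only [hVfam, hev, Equiv.symm_apply_apply]
        exact hcV
      -- N ≥ 1
      obtain ⟨x0, hx0⟩ := hC
      have : x0 ∈ ⋃ i, Kc i := hKcov hx0
      obtain ⟨i0, _⟩ := Set.mem_iUnion.mp this
      haveI : Nonempty (Fin N × Fin N) := ⟨(i0, i0)⟩
      -- separation by thickenings
      have hsep : ∀ p : Fin N × Fin N, ∃ δ, 0 < δ ∧ (p.1 ≠ p.2 →
          Disjoint (thickening δ (Kc p.1)) (thickening δ (Kc p.2))) := by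
        intro p
        by_cases hp : p.1 = p.2
        · exact ⟨1, one_pos, fun h => absurd hp h⟩
        · obtain ⟨δ, hδ, hdisj'⟩ :=
            (hKdisj p.1 p.2 hp).exists_thickenings (hKcomp p.1) (hKcomp p.2).isClosed
          exact ⟨δ, hδ, fun _ => hdisj'⟩
      choose δf hδfpos hδfdisj using hsep
      set δ := Finset.univ.inf' Finset.univ_nonempty δf with hδdef
      have hδpos : 0 < δ := by
        rw [hδdef, Finset.lt_inf'_iff]
        exact fun p _ => hδfpos p
      have hδle : ∀ p : Fin N × Fin N, δ ≤ δf p :=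
        fun p => Finset.inf'_le _ (Finset.mem_univ p)
      choose Uf hUfmem hUfsub using hKsub
      refine ⟨N, fun i => thickening δ (Kc i) ∩ Uf i, ?_, ?_, ?_, ?_⟩
      · exact fun i => isOpen_thickening.inter (h𝒰open _ (hUfmem i))
      · exact fun i => ⟨Uf i, hUfmem i, Set.inter_subset_right⟩
      · intro i j hij
        refine Disjoint.mono Set.inter_subset_left Set.inter_subset_left ?_
        exact Disjoint.mono (thickening_mono (hδle (i, j)) _)
          (thickening_mono (hδle (i, j)) _) (hδfdisj (i, j) hij)
      · intro x hx
        obtain ⟨i, hxi⟩ := Set.mem_iUnion.mp (hKcov hx)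
        exact Set.mem_iUnion.mpr ⟨i, self_subset_thickening hδpos _ hxi, hUfsub i hxi⟩
  obtain ⟨N, W, hWopen, hWsub, hWdisj, hWcov⟩ := main
  set G := ⋃ i, W i with hG
  have hGopen : IsOpen G := isOpen_iUnion hWopen
  have himgclosed : IsClosed (f '' Gᶜ) :=
    ((hGopen.isClosed_compl).isCompact.image hf).isClosed
  refine ⟨(f '' Gᶜ)ᶜ, N, W, himgclosed.isOpen_compl, ?_, hWopen, hWsub, hWdisj, ?_⟩
  · intro hw
    obtain ⟨x, hxGc, hfx⟩ := hw
    exact hxGc (hWcov (by simp [hfx]))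
  · intro x hx
    by_contra hxG
    exact hx ⟨x, hxG, rfl⟩

end Step1

section LemmaA

theorem dim_le_of_zeroDimFibers {X : Type*} [TopologicalSpace X]
    [TopologicalSpace.MetrizableSpace X] [CompactSpace X] {d : ℕ}
    {f : X → (Fin d → ℝ)} (hf : Continuous f)
    (hfib : ∀ w, CovDimLE (f ⁻¹' {w} : Set X) 0) : CovDimLENat X d := by
  classical
  letI : MetricSpace X := TopologicalSpace.metrizableSpaceMetric X
  intro 𝒰 h𝒰fin h𝒰open h𝒰cov
  choose O N W hOopen hOmem hWopen hWsub hWdisj hWcov using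
    fun x : X => step1 hf hfib 𝒰 h𝒰fin h𝒰open h𝒰cov (f x)
  obtain ⟨δ, hδpos, hleb⟩ := lebesgue_number_lemma_of_metric (isCompact_range hf)
    (fun x => hOopen x) (by rintro y ⟨x, rfl⟩; exact Set.mem_iUnion.mpr ⟨x, hOmem x⟩)
  set ε := δ / 3 with hε
  have hεpos : 0 < ε := by positivity
  have hgridsub : ∀ v : Fin d → ℤ, (f ⁻¹' gridW d ε v).Nonempty →
      ∃ x0 : X, f ⁻¹' gridW d ε v ⊆ f ⁻¹' O x0 := by
    rintro v ⟨q, hq⟩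
    obtain ⟨x0, hx0⟩ := hleb (f q) ⟨q, rfl⟩
    refine ⟨x0, fun y hy => hx0 ?_⟩
    have hdist : dist (f y) (f q) < δ := by
      rw [dist_pi_lt_iff hδpos]
      intro i
      have h1 := hy.1 i
      have h2 := hq.1 i
      rw [Real.dist_eq]
      have h3 : |f y i - f q i| ≤ |f y i - ε * v i| + |ε * v i - f q i| := abs_sub_le _ _ _
      rw [abs_sub_comm (ε * v i) (f q i)] at h3
      have : ε = δ / 3 := hε
      linarith
    exact mem_ball.mpr hdist
  choose x0 hx0 using hgridsub
  refine ⟨{S | ∃ (v : Fin d → ℤ) (hne : (f ⁻¹' gridW d ε v).Nonempty)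
      (i : Fin (N (x0 v hne))), S = W (x0 v hne) i ∩ f ⁻¹' gridW d ε v}, ?_, ?_, ?_, ?_⟩
  · rintro S ⟨v, hne, i, rfl⟩
    exact (hWopen _ i).inter ((gridW_isOpen d ε v).preimage hf)
  · ext x
    simp only [Set.mem_sUnion, Set.mem_univ, iff_true]
    set v : Fin d → ℤ := fun i => ⌊f x i / ε⌋ with hv
    have hxv : x ∈ f ⁻¹' gridW d ε v := gridW_mem hεpos (f x)
    have hne : (f ⁻¹' gridW d ε v).Nonempty := ⟨x, hxv⟩
    have hxO : x ∈ f ⁻¹' O (x0 v hne) := hx0 v hne hxv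
    obtain ⟨i, hi⟩ := Set.mem_iUnion.mp (hWcov (x0 v hne) hxO)
    exact ⟨W (x0 v hne) i ∩ f ⁻¹' gridW d ε v, ⟨v, hne, i, rfl⟩, hi, hxv⟩
  · rintro S ⟨v, hne, i, rfl⟩
    obtain ⟨U, hU, hsub⟩ := hWsub (x0 v hne) i
    exact ⟨U, hU, le_trans Set.inter_subset_left hsub⟩
  · intro x
    obtain ⟨hTfin, hTcard⟩ := gridW_mult hεpos (f x)
    set T := {v : Fin d → ℤ | f x ∈ gridW d ε v} with hTdef
    set Φ : (Fin d → ℤ) → Set X := fun v =>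
      if h : ∃ (hne : (f ⁻¹' gridW d ε v).Nonempty) (i : Fin (N (x0 v hne))),
          x ∈ W (x0 v hne) i
      then W (x0 v h.choose) h.choose_spec.choose ∩ f ⁻¹' gridW d ε v else ∅ with hΦ
    have hsub : {S ∈ {S | ∃ (v : Fin d → ℤ) (hne : (f ⁻¹' gridW d ε v).Nonempty)
        (i : Fin (N (x0 v hne))), S = W (x0 v hne) i ∩ f ⁻¹' gridW d ε v} | x ∈ S}
        ⊆ Φ '' T := by
      rintro S ⟨⟨v, hne, i, rfl⟩, hxS⟩
      refine ⟨v, hxS.2, ?_⟩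
      have hex : ∃ (hne' : (f ⁻¹' gridW d ε v).Nonempty) (i' : Fin (N (x0 v hne'))),
          x ∈ W (x0 v hne') i' := ⟨hne, i, hxS.1⟩
      have heq : hex.choose = hne := rfl
      have hi' : hex.choose_spec.choose = i := by
        by_contra hne'
        exact Set.disjoint_left.mp (hWdisj (x0 v hne) hne')
          hex.choose_spec.choose_spec hxS.1
      rw [hΦ]
      simp only [dif_pos hex]
      rw [hi']
    refine ⟨((hTfin.image Φ).subset hsub), ?_⟩
    calc _ ≤ (Φ '' T).ncard := Set.ncard_le_ncard hsub (hTfin.image Φ)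
      _ ≤ T.ncard := Set.ncard_image_le hTfin
      _ ≤ d + 1 := hTcard

end LemmaA

/-- Reduction of Proposition 4.4 to the case `k = n`: if every map
`𝕀^m × K → ℝ^n` can be uniformly approximated by maps `g₁` with `π × g₁`
0-dimensional, then every map `𝕀^m × K → ℝ^k` can be uniformly approximated by maps `g`
with `π × g` `(n - k)`-dimensional. -/
theorem statement18 {K : Type*} [TopologicalSpace K] [CompactSpace K]
    [TopologicalSpace.MetrizableSpace K]
    (n k : ℕ) (hk : k ≤ n) (hK : CovDimLENat K n) (m : ℕ) (hm : 1 ≤ m)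
    (happrox : ∀ h₁ : C((Fin m → unitInterval) × K, EuclideanSpace ℝ (Fin n)),
      ∀ η : ℝ, 0 < η →
        ∃ g₁ : C((Fin m → unitInterval) × K, EuclideanSpace ℝ (Fin n)),
          (∀ q, dist (g₁ q) (h₁ q) ≤ η) ∧
          ∀ z : (Fin m → unitInterval) × EuclideanSpace ℝ (Fin n),
            CovDimLE ((fun q : (Fin m → unitInterval) × K => (q.1, g₁ q)) ⁻¹' {z}) 0) :
    ∀ h : C((Fin m → unitInterval) × K, EuclideanSpace ℝ (Fin k)),
      ∀ ε : ℝ, 0 < ε →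
        ∃ g : C((Fin m → unitInterval) × K, EuclideanSpace ℝ (Fin k)),
          (∀ q, dist (g q) (h q) ≤ ε) ∧
          ∀ z : (Fin m → unitInterval) × EuclideanSpace ℝ (Fin k),
            CovDimLE ((fun q : (Fin m → unitInterval) × K => (q.1, g q)) ⁻¹' {z})
              ((n : ℤ) - k) := by
  classical
  intro h ε hε
  set Q := (Fin m → unitInterval) × K with hQ
  -- the projection and the zero-padding embedding
  set pmap : EuclideanSpace ℝ (Fin n) → EuclideanSpace ℝ (Fin k) :=
    fun y => WithLp.toLp 2 (fun i => y (Fin.castLE hk i)) with hpmap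
  have hpcont : Continuous pmap := by
    show Continuous ((EuclideanSpace.equiv (Fin k) ℝ).symm ∘
      (fun (y : Fin n → ℝ) (i : Fin k) => y (Fin.castLE hk i)) ∘
      (EuclideanSpace.equiv (Fin n) ℝ))
    exact (EuclideanSpace.equiv (Fin k) ℝ).symm.continuous.comp
      ((continuous_pi fun i => continuous_apply _).comp
        (EuclideanSpace.equiv (Fin n) ℝ).continuous)
  have hplip : ∀ a b : EuclideanSpace ℝ (Fin n), dist (pmap a) (pmap b) ≤ dist a b := by
    intro a b
    rw [EuclideanSpace.dist_eq, EuclideanSpace.dist_eq]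
    apply Real.sqrt_le_sqrt
    have hmap : ∑ i : Fin k, dist (pmap a i) (pmap b i) ^ 2
        = ∑ j ∈ Finset.univ.map ⟨Fin.castLE hk, Fin.castLE_injective hk⟩,
            dist (a j) (b j) ^ 2 := by
      rw [Finset.sum_map]
      rfl
    rw [hmap]
    exact Finset.sum_le_sum_of_subset_of_nonneg (Finset.subset_univ _)
      (fun j _ _ => sq_nonneg _)
  set emb : EuclideanSpace ℝ (Fin k) → EuclideanSpace ℝ (Fin n) :=
    fun z => WithLp.toLp 2 (fun j => if hj : (j : ℕ) < k then z ⟨j, hj⟩ else 0) with hemb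
  have hembcont : Continuous emb := by
    show Continuous ((EuclideanSpace.equiv (Fin n) ℝ).symm ∘
      (fun (z : Fin k → ℝ) (j : Fin n) => if hj : (j : ℕ) < k then z ⟨j, hj⟩ else 0) ∘
      (EuclideanSpace.equiv (Fin k) ℝ))
    refine (EuclideanSpace.equiv (Fin n) ℝ).symm.continuous.comp
      ((continuous_pi fun j => ?_).comp (EuclideanSpace.equiv (Fin k) ℝ).continuous)
    by_cases hj : (j : ℕ) < k
    · simpa only [dif_pos hj] using continuous_apply (⟨(j : ℕ), hj⟩ : Fin k)
    · simpa only [dif_neg hj] using (continuous_const : Continuous fun _ : Fin k → ℝ => (0 : ℝ))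
  have hpe : ∀ z : EuclideanSpace ℝ (Fin k), pmap (emb z) = z := by
    intro z
    ext i
    show (if hj : ((Fin.castLE hk i : Fin n) : ℕ) < k then z ⟨_, hj⟩ else 0) = z i
    rw [dif_pos (show ((Fin.castLE hk i : Fin n) : ℕ) < k from i.isLt)]
    exact congrArg z (Fin.ext rfl)
  -- lift, approximate, project
  set h₁ : C(Q, EuclideanSpace ℝ (Fin n)) := ⟨fun q => emb (h q), hembcont.comp h.continuous⟩
    with hh₁
  obtain ⟨g₁, hg₁dist, hg₁dim⟩ := happrox h₁ ε hε
  refine ⟨⟨fun q => pmap (g₁ q), hpcont.comp g₁.continuous⟩, ?_, ?_⟩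
  · intro q
    have h1 : h q = pmap (h₁ q) := (hpe (h q)).symm
    calc dist (pmap (g₁ q)) (h q) = dist (pmap (g₁ q)) (pmap (h₁ q)) := by rw [← h1]
      _ ≤ dist (g₁ q) (h₁ q) := hplip _ _
      _ ≤ ε := hg₁dist q
  · rintro ⟨t, z⟩
    set g : Q → EuclideanSpace ℝ (Fin k) := fun q => pmap (g₁ q) with hg
    set F := ((fun q : Q => (q.1, g q)) ⁻¹' {(t, z)}) with hF
    rcases F.eq_empty_or_nonempty with hFe | hFne
    · exact Or.inl (Set.isEmpty_coe_sort.mpr hFe)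
    refine Or.inr ⟨n - k, by omega, ?_⟩
    have hFclosed : IsClosed F :=
      isClosed_singleton.preimage (continuous_fst.prodMk (hpcont.comp g₁.continuous))
    haveI : CompactSpace F := isCompact_iff_compactSpace.mp hFclosed.isCompact
    -- the map to the complementary coordinates
    set fm : F → (Fin (n - k) → ℝ) :=
      fun q i => g₁ (q : Q) (⟨k + (i : ℕ), by omega⟩ : Fin n) with hfm
    have hfmcont : Continuous fm := by
      refine continuous_pi fun i => ?_
      exact (continuous_apply (⟨k + (i : ℕ), by omega⟩ : Fin n)).comp
        ((EuclideanSpace.equiv (Fin n) ℝ).continuous.comp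
          (g₁.continuous.comp continuous_subtype_val))
    refine dim_le_of_zeroDimFibers hfmcont ?_
    intro w
    -- the corresponding full fiber of π × g₁
    set wbar : EuclideanSpace ℝ (Fin n) :=
      WithLp.toLp 2 (fun j => if hj : (j : ℕ) < k then z ⟨(j : ℕ), hj⟩
        else w ⟨(j : ℕ) - k, by omega⟩) with hwbar
    have hd := hg₁dim (t, wbar)
    set φ : (fm ⁻¹' {w} : Set F) → Q := fun a => ((a : F) : Q) with hφ
    have hφemb : Topology.IsEmbedding φ :=
      Topology.IsEmbedding.subtypeVal.comp Topology.IsEmbedding.subtypeVal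
    have hrange : Set.range φ = (fun q : Q => (q.1, g₁ q)) ⁻¹' {(t, wbar)} := by
      ext q
      constructor
      · rintro ⟨⟨⟨q', hq'F⟩, hq'w⟩, rfl⟩
        have hq'F' : q'.1 = t ∧ g q' = z := Prod.ext_iff.mp hq'F
        have hq'w' : ∀ i : Fin (n - k), g₁ q' (⟨k + (i : ℕ), by omega⟩ : Fin n) = w i :=
          fun i => congrFun hq'w i
        refine Set.mem_preimage.mpr (Set.mem_singleton_iff.mpr (Prod.ext hq'F'.1 ?_))
        ext j
        show g₁ q' j = wbar j
        by_cases hj : (j : ℕ) < k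
        · have h1 : g q' ⟨(j : ℕ), hj⟩ = z ⟨(j : ℕ), hj⟩ := congrFun (congrArg WithLp.ofLp hq'F'.2) _
          have h2 : Fin.castLE hk (⟨(j : ℕ), hj⟩ : Fin k) = j := Fin.ext rfl
          have h3 : g q' ⟨(j : ℕ), hj⟩ = g₁ q' j := by
            show g₁ q' (Fin.castLE hk ⟨(j : ℕ), hj⟩) = g₁ q' j
            rw [h2]
          rw [hwbar]
          show g₁ q' j = if hj' : (j : ℕ) < k then z ⟨(j : ℕ), hj'⟩ else _
          rw [dif_pos hj, ← h1, h3]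
        · have h1 := hq'w' ⟨(j : ℕ) - k, by omega⟩
          have h2 : (⟨k + ((j : ℕ) - k), by omega⟩ : Fin n) = j := Fin.ext (by simp; omega)
          rw [h2] at h1
          rw [hwbar]
          show g₁ q' j = if hj' : (j : ℕ) < k then z ⟨(j : ℕ), hj'⟩ else _
          rw [dif_neg hj]
          exact h1
      · intro hq
        have hq' : q.1 = t ∧ g₁ q = wbar := Prod.ext_iff.mp (Set.mem_singleton_iff.mp hq)
        have hgz : g q = z := by
          ext i
          show g₁ q (Fin.castLE hk i) = z i
          have h1 : g₁ q (Fin.castLE hk i) = wbar (Fin.castLE hk i) := congrFun (congrArg WithLp.ofLp hq'.2) _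
          rw [h1, hwbar]
          show (if hj : ((Fin.castLE hk i : Fin n) : ℕ) < k then z ⟨_, hj⟩ else _) = z i
          rw [dif_pos (show ((Fin.castLE hk i : Fin n) : ℕ) < k from i.isLt)]
          exact congrArg z (Fin.ext rfl)
        have hqF : q ∈ F := Set.mem_preimage.mpr (Set.mem_singleton_iff.mpr
          (Prod.ext hq'.1 hgz))
        have hqw : fm ⟨q, hqF⟩ = w := by
          funext i
          show g₁ q (⟨k + (i : ℕ), by omega⟩ : Fin n) = w i
          have h1 : g₁ q (⟨k + (i : ℕ), by omega⟩ : Fin n)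
              = wbar (⟨k + (i : ℕ), by omega⟩ : Fin n) := congrFun (congrArg WithLp.ofLp hq'.2) _
          rw [h1, hwbar]
          show (if hj : ((⟨k + (i : ℕ), _⟩ : Fin n) : ℕ) < k then z ⟨_, hj⟩
            else w ⟨_ - k, _⟩) = w i
          rw [dif_neg (by simp)]
          congr 1
          exact Fin.ext (by simp)
        exact ⟨⟨⟨q, hqF⟩, hqw⟩, rfl⟩
    exact covDimLE_congr
      ((hφemb.toHomeomorph).trans (Homeomorph.setCongr hrange)) hd
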